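/- For every j ∈ [k]: every path from c_j to d_j in U_int has cost at least 5kN, and for each r ∈ [N] the horizontal canonical path Canonical(r; c_j–d_j) has cost exactly 5kN; hence each Canonical(r; c_j–d_j) is a shortest (minimum-cost) c_j–d_j path in U_int. -/

import Mathlib

/-- A directed path (self-avoiding walk) from `s` to `t` in the digraph with
edge relation `E`, given as the list of its vertices in order. -/
structure IsPathList {V : Type*} (E : V → V → Prop) (s t : V) (p : List V) : Prop where
  chain : p.Chain' E
  nodup : p.Nodup
  head : p.head? = some s
  last : p.getLast? = some t

/-- A shortest directed `s⇝t` path, where the length of a path is its number of vertices. -/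
def IsShortestDirPath {V : Type*} (E : V → V → Prop) (s t : V) (p : List V) : Prop :=
  IsPathList E s t p ∧ ∀ q : List V, IsPathList E s t q → p.length ≤ q.length

/-- Symmetrization of a relation: the adjacency of the undirected graph obtained by
forgetting the orientation of the edges. -/
def UAdj {V : Type*} (E : V → V → Prop) (x y : V) : Prop := E x y ∨ E y x

/-- The cost of a path: the sum of the costs of its vertices. -/
def pathCost {V : Type*} (cost : V → ℕ) (p : List V) : ℕ := (p.map cost).sum

/-- A shortest (minimum-cost) `s`–`t` path in the undirected graph obtained from `E`. -/
def IsShortestCostPath {V : Type*} (E : V → V → Prop) (cost : V → ℕ) (s t : V)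
    (p : List V) : Prop :=
  IsPathList (UAdj E) s t p ∧
    ∀ q : List V, IsPathList (UAdj E) s t q → pathCost cost p ≤ pathCost cost q

/-- The (directed) edges traversed by a path, as ordered pairs of consecutive vertices. -/
def dirEdges {V : Type*} (p : List V) : List (V × V) := p.zip p.tail

/-- Two directed paths are edge-disjoint. -/
def EdgeDisj {V : Type*} (p q : List V) : Prop := ∀ e ∈ dirEdges p, e ∉ dirEdges q

/-- The (undirected) edges traversed by a path, as unordered pairs. -/
def uEdges {V : Type*} (p : List V) : List (Sym2 V) := (dirEdges p).map fun e => s(e.1, e.2)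

/-- Two undirected paths are edge-disjoint. -/
def UEdgeDisj {V : Type*} (p q : List V) : Prop := ∀ e ∈ uEdges p, e ∉ uEdges q

/-- Two paths are vertex-disjoint. -/
def VertDisj {V : Type*} (p q : List V) : Prop := ∀ v ∈ p, v ∉ q

/-- The vertices of the intermediate graph `D_int` (also the vertex set of `U_int`):
grid vertices `w_{i,j}^{q,ℓ}` (`grid i j q ℓ`, with `q` the column and `ℓ` the row,
indices `0`-based) and terminal vertices `a i`, `b i`, `c j`, `d j`. -/
inductive DIntV (k N : ℕ) where
  | grid (i j : Fin k) (q ℓ : Fin N)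
  | a (i : Fin k)
  | b (i : Fin k)
  | c (j : Fin k)
  | d (j : Fin k)
  deriving DecidableEq, Fintype

/-- The directed edges of `D_int`. -/
inductive DIntE (k N : ℕ) : DIntV k N → DIntV k N → Prop where
  /-- `w_{i,j}^{q,ℓ} → w_{i,j}^{q,ℓ+1}` for `ℓ < N` -/
  | up (i j : Fin k) (q ℓ ℓ' : Fin N) (h : (ℓ' : ℕ) = (ℓ : ℕ) + 1) :
      DIntE k N (.grid i j q ℓ) (.grid i j q ℓ')
  /-- `w_{i,j}^{q,ℓ} → w_{i,j}^{q+1,ℓ}` for `q < N` -/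
  | right (i j : Fin k) (q q' ℓ : Fin N) (h : (q' : ℕ) = (q : ℕ) + 1) :
      DIntE k N (.grid i j q ℓ) (.grid i j q' ℓ)
  /-- `w_{i,j}^{N,ℓ} → w_{i+1,j}^{1,ℓ}` for `i < k` -/
  | hmatch (i i' j : Fin k) (q q' ℓ : Fin N)
      (hi : (i' : ℕ) = (i : ℕ) + 1) (hq : (q : ℕ) + 1 = N) (hq' : (q' : ℕ) = 0) :
      DIntE k N (.grid i j q ℓ) (.grid i' j q' ℓ)
  /-- `w_{i,j}^{ℓ,N} → w_{i,j+1}^{ℓ,1}` for `j < k` -/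
  | vmatch (i j j' : Fin k) (q ℓ ℓ' : Fin N)
      (hj : (j' : ℕ) = (j : ℕ) + 1) (hl : (ℓ : ℕ) + 1 = N) (hl' : (ℓ' : ℕ) = 0) :
      DIntE k N (.grid i j q ℓ) (.grid i j' q ℓ')
  /-- `a_i → w_{i,1}^{q,1}` for all `q ∈ [N]` -/
  | srcA (i j : Fin k) (q ℓ : Fin N) (hj : (j : ℕ) = 0) (hl : (ℓ : ℕ) = 0) :
      DIntE k N (.a i) (.grid i j q ℓ)
  /-- `w_{i,k}^{q,N} → b_i` for all `q ∈ [N]` -/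
  | snkB (i j : Fin k) (q ℓ : Fin N) (hj : (j : ℕ) + 1 = k) (hl : (ℓ : ℕ) + 1 = N) :
      DIntE k N (.grid i j q ℓ) (.b i)
  /-- `c_j → w_{1,j}^{1,ℓ}` for all `ℓ ∈ [N]` -/
  | srcC (i j : Fin k) (q ℓ : Fin N) (hi : (i : ℕ) = 0) (hq : (q : ℕ) = 0) :
      DIntE k N (.c j) (.grid i j q ℓ)
  /-- `w_{k,j}^{N,ℓ} → d_j` for all `ℓ ∈ [N]` -/
  | snkD (i j : Fin k) (q ℓ : Fin N) (hi : (i : ℕ) + 1 = k) (hq : (q : ℕ) + 1 = N) :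
      DIntE k N (.grid i j q ℓ) (.d j)

/-- The horizontal canonical path `Canonical(r; c_j ⇝ d_j)`, as the list of its
vertices : `c_j`, then row `r` of the grids `D_{1,j}, …, D_{k,j}` from left to right,
then `d_j`. -/
def canonH (k N : ℕ) (j : Fin k) (r : Fin N) : List (DIntV k N) :=
  DIntV.c j ::
    (((List.finRange k).flatMap fun i =>
        (List.finRange N).map fun q => DIntV.grid i j q r) ++ [DIntV.d j])

/-- The vertical canonical path `Canonical(r; a_i ⇝ b_i)`, as the list of its
vertices : `a_i`, then column `r` of the grids `D_{i,1}, …, D_{i,k}` from bottom to top,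
then `b_i`. -/
def canonV (k N : ℕ) (i : Fin k) (r : Fin N) : List (DIntV k N) :=
  DIntV.a i ::
    (((List.finRange k).flatMap fun j =>
        (List.finRange N).map fun ℓ => DIntV.grid i j r ℓ) ++ [DIntV.b i])
/-- The adjacency relation of the undirected graph `U_int`: the symmetrization of the
edges of `D_int` (i.e. the same grid, matching and terminal edges, undirected). -/
def UIntAdj (k N : ℕ) : DIntV k N → DIntV k N → Prop := UAdj (DIntE k N)

/-- The vertex costs in `U_int`: each grid (black) vertex has cost `1`, and each
terminal (green) vertex has cost `2kN`. -/
def costInt (k N : ℕ) : DIntV k N → ℕ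
  | .grid _ _ _ _ => 1
  | _ => 2 * k * N

section UIntAux

open List

/-- Discrete intermediate value theorem for lists of integers whose steps
increase by at most one. -/
private lemma aux_ivt : ∀ (l : List ℤ), l.Chain' (fun a b => b ≤ a + 1) →
    ∀ x y m : ℤ, l.head? = some x → l.getLast? = some y → x ≤ m → m ≤ y → m ∈ l := by
  intro l
  induction l with
  | nil => intro _ x y m h; simp at h
  | cons a t ih =>
    intro hch x y m hh hl hxm hmy
    simp only [List.head?_cons, Option.some.injEq] at hh
    subst hh
    by_cases hma : m ≤ a
    · have hma' : m = a := le_antisymm hma hxm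
      exact hma' ▸ List.mem_cons_self
    · push_neg at hma
      match t, hch, hl, ih with
      | [], _, hl, _ =>
        simp only [List.getLast?_singleton, Option.some.injEq] at hl
        omega
      | b :: t', hch, hl, ih =>
        rw [List.Chain', List.isChain_cons_cons] at hch
        rw [List.getLast?_cons_cons] at hl
        have hb : b ≤ a + 1 := hch.1
        exact List.mem_cons_of_mem _ (ih hch.2 b y m rfl hl (by omega) hmy)

private lemma aux_chain_map {V W : Type*} {R : V → V → Prop} {S : W → W → Prop} (f : V → W) :
    ∀ (l : List V), l.Chain' R → (∀ x ∈ l, ∀ y ∈ l, R x y → S (f x) (f y)) →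
      (l.map f).Chain' S := by
  intro l
  induction l with
  | nil => intros; exact List.isChain_nil
  | cons a t ih =>
    intro hch hmem
    match t, hch, ih with
    | [], _, _ => exact List.isChain_singleton _
    | b :: t', hch, ih =>
      rw [List.Chain', List.isChain_cons_cons] at hch
      rw [List.map_cons, List.map_cons, List.Chain', List.isChain_cons_cons]
      refine ⟨hmem a (by simp) b (by simp) hch.1, ?_⟩
      rw [← List.map_cons]
      exact ih hch.2 fun x hx y hy hxy =>
        hmem x (List.mem_cons_of_mem _ hx) y (List.mem_cons_of_mem _ hy) hxy

/-- The global column of a vertex, with `c` at `-1` and `d` at `kN`. -/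
private def colZ (k N : ℕ) : DIntV k N → ℤ
  | .grid i _ q _ => ((i : ℕ) : ℤ) * (N : ℤ) + ((q : ℕ) : ℤ)
  | .c _ => -1
  | .d _ => (k : ℤ) * (N : ℤ)
  | .a _ => 0
  | .b _ => 0

/-- The vertices relevant for a `c_j`–`d_j` path: grid vertices, `c j` and `d j`. -/
private def relevP {k N : ℕ} (j : Fin k) (v : DIntV k N) : Prop :=
  (∃ i j' q ℓ, v = DIntV.grid i j' q ℓ) ∨ v = DIntV.c j ∨ v = DIntV.d j

private lemma aux_step {k N : ℕ} {j : Fin k} {x y : DIntV k N}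
    (hx : relevP j x) (hy : relevP j y) (h : UAdj (DIntE k N) x y) :
    colZ k N y ≤ colZ k N x + 1 := by
  rcases h with h | h
  · cases h with
    | up i j q ℓ ℓ' h => simp only [colZ]; linarith
    | right i j q q' ℓ h =>
        have hc : ((q' : ℕ) : ℤ) = ((q : ℕ) : ℤ) + 1 := by exact_mod_cast h
        simp only [colZ]; linarith
    | hmatch i i' j q q' ℓ hi hq hq' =>
        have c1 : ((i' : ℕ) : ℤ) = ((i : ℕ) : ℤ) + 1 := by exact_mod_cast hi
        have c2 : ((q : ℕ) : ℤ) + 1 = (N : ℤ) := by exact_mod_cast hq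
        have c3 : ((q' : ℕ) : ℤ) = 0 := by exact_mod_cast hq'
        simp only [colZ]
        have hkey : ((i : ℕ) : ℤ) * (N : ℤ) + (N : ℤ) = (((i : ℕ) : ℤ) + 1) * (N : ℤ) := by ring
        rw [c1, c3]
        linarith
    | vmatch i j j' q ℓ ℓ' hj hl hl' => simp only [colZ]; linarith
    | srcA i j q ℓ hj hl =>
        rcases hx with ⟨_, _, _, _, hh⟩ | hh | hh <;> exact absurd hh (by simp)
    | snkB i j q ℓ hj hl =>
        rcases hy with ⟨_, _, _, _, hh⟩ | hh | hh <;> exact absurd hh (by simp)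
    | srcC i j q ℓ hi hq =>
        have c1 : ((i : ℕ) : ℤ) = 0 := by exact_mod_cast hi
        have c2 : ((q : ℕ) : ℤ) = 0 := by exact_mod_cast hq
        simp only [colZ]
        rw [c1, c2]
        norm_num
    | snkD i j q ℓ hi hq =>
        have c1 : ((i : ℕ) : ℤ) + 1 = (k : ℤ) := by exact_mod_cast hi
        have c2 : ((q : ℕ) : ℤ) + 1 = (N : ℤ) := by exact_mod_cast hq
        simp only [colZ]
        have hkey : (((i : ℕ) : ℤ) + 1) * (N : ℤ) = ((i : ℕ) : ℤ) * (N : ℤ) + (N : ℤ) := by ring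
        rw [← c1]
        linarith
  · cases h with
    | up i j q ℓ ℓ' h => simp only [colZ]; linarith
    | right i j q q' ℓ h =>
        have hc : ((q' : ℕ) : ℤ) = ((q : ℕ) : ℤ) + 1 := by exact_mod_cast h
        simp only [colZ]; linarith
    | hmatch i i' j q q' ℓ hi hq hq' =>
        have c1 : ((i' : ℕ) : ℤ) = ((i : ℕ) : ℤ) + 1 := by exact_mod_cast hi
        have c2 : ((q : ℕ) : ℤ) + 1 = (N : ℤ) := by exact_mod_cast hq
        have c3 : ((q' : ℕ) : ℤ) = 0 := by exact_mod_cast hq'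
        simp only [colZ]
        have hkey : (((i : ℕ) : ℤ) + 1) * (N : ℤ) = ((i : ℕ) : ℤ) * (N : ℤ) + (N : ℤ) := by ring
        rw [c1, c3]
        linarith
    | vmatch i j j' q ℓ ℓ' hj hl hl' => simp only [colZ]; linarith
    | srcA i j q ℓ hj hl =>
        rcases hy with ⟨_, _, _, _, hh⟩ | hh | hh <;> exact absurd hh (by simp)
    | snkB i j q ℓ hj hl =>
        rcases hx with ⟨_, _, _, _, hh⟩ | hh | hh <;> exact absurd hh (by simp)
    | srcC i j q ℓ hi hq =>
        have c1 : ((i : ℕ) : ℤ) = 0 := by exact_mod_cast hi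
        have c2 : ((q : ℕ) : ℤ) = 0 := by exact_mod_cast hq
        simp only [colZ]
        rw [c1, c2]
        norm_num
    | snkD i j q ℓ hi hq =>
        have c1 : ((i : ℕ) : ℤ) + 1 = (k : ℤ) := by exact_mod_cast hi
        have c2 : ((q : ℕ) : ℤ) + 1 = (N : ℤ) := by exact_mod_cast hq
        simp only [colZ]
        have hkey : (((i : ℕ) : ℤ) + 1) * (N : ℤ) = ((i : ℕ) : ℤ) * (N : ℤ) + (N : ℤ) := by ring
        rw [← c1]
        linarith

/-- The canonical path, reindexed by a single global index. -/
private def Gfun (k N : ℕ) (hk : 0 < k) (hN : 0 < N) (j : Fin k) (r : Fin N) :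
    ℕ → DIntV k N := fun n =>
  if n = 0 then DIntV.c j
  else if n = k * N + 1 then DIntV.d j
  else DIntV.grid ⟨((n - 1) / N) % k, Nat.mod_lt _ hk⟩ j
        ⟨((n - 1) % N) % N, Nat.mod_lt _ hN⟩ r

private lemma G_zero (k N : ℕ) (hk : 0 < k) (hN : 0 < N) (j : Fin k) (r : Fin N) :
    Gfun k N hk hN j r 0 = DIntV.c j := by simp [Gfun]

private lemma G_last (k N : ℕ) (hk : 0 < k) (hN : 0 < N) (j : Fin k) (r : Fin N) :
    Gfun k N hk hN j r (k * N + 1) = DIntV.d j := by simp [Gfun]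

private lemma G_grid' (k N : ℕ) (hk : 0 < k) (hN : 0 < N) (j : Fin k) (r : Fin N)
    {n a b : ℕ} (h0 : n ≠ 0) (h1 : n ≤ k * N) (ha : (n - 1) / N = a) (hb : (n - 1) % N = b)
    (hak : a < k) (hbN : b < N) :
    Gfun k N hk hN j r n = DIntV.grid ⟨a, hak⟩ j ⟨b, hbN⟩ r := by
  have h2 : n ≠ k * N + 1 := by omega
  subst ha hb
  simp only [Gfun, if_neg h0, if_neg h2, DIntV.grid.injEq, Fin.mk.injEq]
  exact ⟨Nat.mod_eq_of_lt hak, trivial, Nat.mod_eq_of_lt hbN, trivial⟩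

private lemma aux_flatMap_range {α : Type*} (f : ℕ → ℕ → α) {b : ℕ} (hb : 0 < b) :
    ∀ a : ℕ, ((List.range a).flatMap fun i => (List.range b).map fun q => f i q)
      = (List.range (a * b)).map fun n => f (n / b) (n % b) := by
  intro a
  induction a with
  | zero => simp
  | succ a ih =>
    rw [List.range_succ, List.flatMap_append, ih, Nat.succ_mul, List.range_add,
      List.map_append]
    congr 1
    simp only [List.flatMap_cons, List.flatMap_nil, List.append_nil, List.map_map]
    refine List.map_congr_left ?_
    intro q hq
    rw [List.mem_range] at hq
    have h1 : (a * b + q) / b = a := by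
      rw [Nat.add_comm, Nat.mul_comm, Nat.add_mul_div_left _ _ hb, Nat.div_eq_of_lt hq,
        Nat.zero_add]
    have h2 : (a * b + q) % b = q := by
      rw [Nat.add_comm, Nat.mul_comm, Nat.add_mul_mod_self_left, Nat.mod_eq_of_lt hq]
    simp only [Function.comp_apply, h1, h2]

private lemma canonH_eq (k N : ℕ) (hk : 0 < k) (hN : 0 < N) (j : Fin k) (r : Fin N) :
    canonH k N j r = (List.range (k * N + 2)).map (Gfun k N hk hN j r) := by
  have hL : ((List.finRange k).flatMap fun i =>
        (List.finRange N).map fun q => DIntV.grid i j q r)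
      = (List.range (k * N)).map fun n => Gfun k N hk hN j r (n + 1) := by
    have h1 : (fun (i : Fin k) => (List.finRange N).map fun q => DIntV.grid i j q r)
        = fun (i : Fin k) => (List.range N).map fun q =>
            (DIntV.grid ⟨(i : ℕ) % k, Nat.mod_lt _ hk⟩ j ⟨q % N, Nat.mod_lt _ hN⟩ r) := by
      funext i
      conv_rhs => rw [← List.map_coe_finRange_eq_range (n := N), List.map_map]
      refine List.map_congr_left ?_
      intro q _
      simp only [Function.comp_apply, DIntV.grid.injEq]
      exact ⟨Fin.ext (Nat.mod_eq_of_lt i.isLt).symm, trivial,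
        Fin.ext (Nat.mod_eq_of_lt q.isLt).symm, trivial⟩
    have h2 : ((List.finRange k).flatMap fun (i : Fin k) =>
          (List.range N).map fun q =>
            DIntV.grid ⟨(i : ℕ) % k, Nat.mod_lt _ hk⟩ j ⟨q % N, Nat.mod_lt _ hN⟩ r)
        = ((List.finRange k).map Fin.val).flatMap fun (i : ℕ) =>
          (List.range N).map fun q =>
            DIntV.grid ⟨i % k, Nat.mod_lt _ hk⟩ j ⟨q % N, Nat.mod_lt _ hN⟩ r :=
      (List.flatMap_map Fin.val (fun (i : ℕ) =>
        (List.range N).map fun q =>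
          DIntV.grid ⟨i % k, Nat.mod_lt _ hk⟩ j ⟨q % N, Nat.mod_lt _ hN⟩ r)
        (List.finRange k)).symm
    rw [h1, h2, List.map_coe_finRange_eq_range,
      aux_flatMap_range (fun i q =>
        (DIntV.grid ⟨i % k, Nat.mod_lt _ hk⟩ j ⟨q % N, Nat.mod_lt _ hN⟩ r)) hN k]
    refine List.map_congr_left ?_
    intro n hn
    rw [List.mem_range] at hn
    have h1 : n + 1 ≠ 0 := by omega
    have h2 : n + 1 ≠ k * N + 1 := by omega
    simp only [Gfun, if_neg h1, if_neg h2, Nat.add_sub_cancel]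
  rw [canonH, hL]
  rw [show k * N + 2 = (k * N + 1) + 1 from rfl, List.range_succ, List.map_append,
    List.range_succ_eq_map, List.map_cons, List.map_map, List.map_cons, List.map_nil,
    G_zero, G_last]
  simp only [List.cons_append, List.nil_append, Function.comp_def, Nat.succ_eq_add_one]

private def toIdx (k N : ℕ) : DIntV k N → ℕ
  | .grid i _ q _ => (i : ℕ) * N + (q : ℕ) + 1
  | .c _ => 0
  | .d _ => k * N + 1
  | .a _ => 0
  | .b _ => 0

private lemma toIdx_G (k N : ℕ) (hk : 0 < k) (hN : 0 < N) (j : Fin k) (r : Fin N)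
    {n : ℕ} (hn : n < k * N + 2) : toIdx k N (Gfun k N hk hN j r n) = n := by
  rcases eq_or_ne n 0 with rfl | h0
  · rw [G_zero]; rfl
  rcases eq_or_ne n (k * N + 1) with rfl | h1
  · rw [G_last]; rfl
  have h2 : n ≤ k * N := by omega
  have hdk : (n - 1) / N < k := (Nat.div_lt_iff_lt_mul hN).mpr (by omega)
  rw [G_grid' k N hk hN j r h0 h2 rfl rfl hdk (Nat.mod_lt _ hN)]
  simp only [toIdx]
  have hdm := Nat.div_add_mod (n - 1) N
  rw [Nat.mul_comm, hdm]
  omega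

private lemma G_nodup (k N : ℕ) (hk : 0 < k) (hN : 0 < N) (j : Fin k) (r : Fin N) :
    ((List.range (k * N + 2)).map (Gfun k N hk hN j r)).Nodup := by
  refine List.Nodup.map_on ?_ List.nodup_range
  intro x hx y hy hxy
  rw [List.mem_range] at hx hy
  have := congrArg (toIdx k N) hxy
  rwa [toIdx_G k N hk hN j r hx, toIdx_G k N hk hN j r hy] at this

private lemma G_chain (k N : ℕ) (hk : 0 < k) (hN : 0 < N) (j : Fin k) (r : Fin N) :
    ((List.range (k * N + 2)).map (Gfun k N hk hN j r)).Chain' (UAdj (DIntE k N)) := by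
  rw [List.Chain', List.isChain_map]
  refine (List.isChain_range_succ _ (k * N + 1)).mpr ?_
  intro m hm
  have hkN : 0 < k * N := Nat.mul_pos hk hN
  rcases eq_or_ne m 0 with rfl | h0
  · rw [G_zero, G_grid' k N hk hN j r (n := 1) (a := 0) (b := 0) one_ne_zero (by omega)
      (by simp) (by simp) hk hN]
    exact Or.inl (DIntE.srcC _ _ _ _ rfl rfl)
  rcases eq_or_ne m (k * N) with rfl | h1
  · obtain ⟨k', rfl⟩ : ∃ k', k = k' + 1 := ⟨k - 1, by omega⟩
    obtain ⟨N', rfl⟩ : ∃ N', N = N' + 1 := ⟨N - 1, by omega⟩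
    have hprod : (k' + 1) * (N' + 1) - 1 = N' + (N' + 1) * k' := by
      have : (k' + 1) * (N' + 1) = N' + (N' + 1) * k' + 1 := by ring
      omega
    have ekd : ((k' + 1) * (N' + 1) - 1) / (N' + 1) = k' := by
      rw [hprod, Nat.add_mul_div_left _ _ hN, Nat.div_eq_of_lt (by omega), Nat.zero_add]
    have ekm : ((k' + 1) * (N' + 1) - 1) % (N' + 1) = N' := by
      rw [hprod, Nat.add_mul_mod_self_left, Nat.mod_eq_of_lt (by omega)]
    rw [G_grid' _ _ hk hN j r (n := (k' + 1) * (N' + 1)) (a := k') (b := N') (by omega)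
      le_rfl ekd ekm (by omega) (by omega), G_last]
    exact Or.inl (DIntE.snkD _ _ _ _ rfl rfl)
  · -- middle case
    have hmlt : m < k * N := by omega
    obtain ⟨n, rfl⟩ : ∃ n, m = n + 1 := ⟨m - 1, by omega⟩
    have he : n % N < N := Nat.mod_lt _ hN
    have hde : N * (n / N) + n % N = n := Nat.div_add_mod n N
    have hdk : n / N < k := (Nat.div_lt_iff_lt_mul hN).mpr (by omega)
    have hdk1 : (n + 1) / N < k := (Nat.div_lt_iff_lt_mul hN).mpr (by omega)
    have hG1 : Gfun k N hk hN j r (n + 1)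
        = DIntV.grid ⟨n / N, hdk⟩ j ⟨n % N, he⟩ r :=
      G_grid' k N hk hN j r (by omega) (by omega) (by simp) (by simp) hdk he
    rcases Nat.lt_or_ge (n % N + 1) N with hcase | hcase
    · -- staying inside a grid : a `right` edge
      have hstep : n + 1 = (n % N + 1) + N * (n / N) := by omega
      have hd2 : (n + 1) / N = n / N := by
        rw [hstep, Nat.add_mul_div_left _ _ hN, Nat.div_eq_of_lt hcase, Nat.zero_add]
      have hm2 : (n + 1) % N = n % N + 1 := by
        rw [hstep, Nat.add_mul_mod_self_left, Nat.mod_eq_of_lt hcase]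
      have hG2 : Gfun k N hk hN j r (n + 1 + 1)
          = DIntV.grid ⟨n / N, hdk⟩ j ⟨n % N + 1, hcase⟩ r :=
        G_grid' k N hk hN j r (by omega) (by omega) (by simpa using hd2)
          (by simpa using hm2) hdk hcase
      rw [hG1, hG2]
      exact Or.inl (DIntE.right _ _ _ _ _ rfl)
    · -- crossing to the next grid : an `hmatch` edge
      have heq : n % N + 1 = N := by omega
      have hexp : N * (n / N + 1) = N * (n / N) + N := by ring
      have hstep : n + 1 = 0 + N * (n / N + 1) := by omega
      have hd2 : (n + 1) / N = n / N + 1 := by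
        rw [hstep, Nat.add_mul_div_left _ _ hN, Nat.zero_div, Nat.zero_add]
      have hm2 : (n + 1) % N = 0 := by
        rw [hstep, Nat.add_mul_mod_self_left, Nat.zero_mod]
      have hdk2 : n / N + 1 < k := by omega
      have hG2 : Gfun k N hk hN j r (n + 1 + 1)
          = DIntV.grid ⟨n / N + 1, hdk2⟩ j ⟨0, hN⟩ r :=
        G_grid' k N hk hN j r (by omega) (by omega) (by simpa using hd2)
          (by simpa using hm2) hdk2 hN
      rw [hG1, hG2]
      exact Or.inl (DIntE.hmatch _ _ _ _ _ _ rfl heq rfl)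

private lemma sum_map_eq_length {α : Type*} (f : α → ℕ) :
    ∀ (l : List α), (∀ x ∈ l, f x = 1) → (l.map f).sum = l.length := by
  intro l
  induction l with
  | nil => simp
  | cons a t ih =>
    intro h
    rw [List.map_cons, List.sum_cons, h a (by simp), List.length_cons,
      ih fun x hx => h x (List.mem_cons_of_mem _ hx)]
    omega

end UIntAux

/-- for every `j ∈ [k]`, every `c_j`–`d_j` path in `U_int` has cost at
least `5kN`, and for each `r ∈ [N]` the horizontal canonical path `Canonical(r; c_j–d_j)`
has cost exactly `5kN`; hence each `Canonical(r; c_j–d_j)` is a shortest (minimum-cost)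
`c_j`–`d_j` path in `U_int`. -/
theorem UInt_canonH_shortest (N k : ℕ) (hN : 1 ≤ N) (hk : 1 ≤ k) (j : Fin k) :
    (∀ p : List (DIntV k N),
      IsPathList (UIntAdj k N) (DIntV.c j) (DIntV.d j) p →
        5 * k * N ≤ pathCost (costInt k N) p) ∧
    (∀ r : Fin N,
      pathCost (costInt k N) (canonH k N j r) = 5 * k * N ∧
      IsShortestCostPath (DIntE k N) (costInt k N) (DIntV.c j) (DIntV.d j)
        (canonH k N j r)) := by
  have hkN : 0 < k * N := Nat.mul_pos hk hN
  classical
  -- Part 1 : the lower bound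
  have part1 : ∀ p : List (DIntV k N),
      IsPathList (UIntAdj k N) (DIntV.c j) (DIntV.d j) p →
        5 * k * N ≤ pathCost (costInt k N) p := by
    intro p hp
    have hc : DIntV.c j ∈ p := List.mem_of_mem_head? (by rw [hp.head]; rfl)
    have hd : DIntV.d j ∈ p := List.mem_of_mem_getLast? (by rw [hp.last]; rfl)
    have hcd : (DIntV.c j : DIntV k N) ≠ DIntV.d j := by simp
    have hsum : pathCost (costInt k N) p = ∑ v ∈ p.toFinset, costInt k N v :=
      (List.sum_toFinset _ hp.nodup).symm
    by_cases hall : ∀ v ∈ p, relevP j v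
    · -- all vertices are grid vertices, `c j` or `d j`
      have hchain : (p.map (colZ k N)).Chain' (fun a b => b ≤ a + 1) :=
        aux_chain_map _ p hp.chain fun x hx y hy hxy =>
          aux_step (hall x hx) (hall y hy) hxy
      have hh : (p.map (colZ k N)).head? = some (-1) := by
        rw [List.head?_map, hp.head]; rfl
      have hl : (p.map (colZ k N)).getLast? = some ((k : ℤ) * (N : ℤ)) := by
        rw [List.getLast?_map, hp.last]; rfl
      set T : Finset (DIntV k N) :=
        p.toFinset.filter (fun v => ∃ i j' q ℓ, v = DIntV.grid i j' q ℓ) with hTdef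
      have hsubT : Finset.Icc (0 : ℤ) ((k : ℤ) * (N : ℤ) - 1) ⊆ T.image (colZ k N) := by
        intro m hm
        rw [Finset.mem_Icc] at hm
        have hmem : m ∈ p.map (colZ k N) :=
          aux_ivt _ hchain (-1) ((k : ℤ) * (N : ℤ)) m hh hl (by linarith [hm.1])
            (by linarith [hm.2])
        rw [List.mem_map] at hmem
        obtain ⟨v, hvp, hvcol⟩ := hmem
        rcases hall v hvp with hg | rfl | rfl
        · exact Finset.mem_image.mpr
            ⟨v, Finset.mem_filter.mpr ⟨List.mem_toFinset.mpr hvp, hg⟩, hvcol⟩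
        · exfalso; simp only [colZ] at hvcol; omega
        · exfalso; simp only [colZ] at hvcol; rw [hvcol] at hm; linarith [hm.2]
      have hcardT : k * N ≤ T.card := by
        have h1 := Finset.card_le_card hsubT
        have h2 := Finset.card_image_le (s := T) (f := colZ k N)
        rw [Int.card_Icc] at h1
        have h3 : ((k : ℤ) * (N : ℤ) - 1 + 1 - 0).toNat = k * N := by
          have : (k : ℤ) * (N : ℤ) - 1 + 1 - 0 = ((k * N : ℕ) : ℤ) := by push_cast; ring
          rw [this, Int.toNat_natCast]
        rw [h3] at h1
        omega
      have hcT : DIntV.c j ∉ T := by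
        intro hmem
        obtain ⟨_, _, _, _, hh'⟩ := (Finset.mem_filter.mp hmem).2
        exact absurd hh' (by simp)
      have hdT : DIntV.d j ∉ T := by
        intro hmem
        obtain ⟨_, _, _, _, hh'⟩ := (Finset.mem_filter.mp hmem).2
        exact absurd hh' (by simp)
      have hsub2 : insert (DIntV.c j) (insert (DIntV.d j) T) ⊆ p.toFinset := by
        intro v hv
        simp only [Finset.mem_insert] at hv
        rcases hv with rfl | rfl | hv
        · exact List.mem_toFinset.mpr hc
        · exact List.mem_toFinset.mpr hd
        · exact (Finset.mem_filter.mp hv).1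
      have hTsum : ∑ v ∈ T, costInt k N v = T.card := by
        rw [Finset.card_eq_sum_ones]
        refine Finset.sum_congr rfl fun v hv => ?_
        obtain ⟨i, j', q, ℓ, rfl⟩ := (Finset.mem_filter.mp hv).2
        rfl
      have hbig : 2 * k * N + (2 * k * N + T.card) ≤ pathCost (costInt k N) p := by
        rw [hsum]
        have h4 : ∑ v ∈ insert (DIntV.c j) (insert (DIntV.d j) T), costInt k N v
            = 2 * k * N + (2 * k * N + T.card) := by
          rw [Finset.sum_insert (by simp [Finset.mem_insert, hcd, hcT]),
            Finset.sum_insert hdT, hTsum]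
          rfl
        rw [← h4]
        exact Finset.sum_le_sum_of_subset hsub2
      have harith : 5 * k * N = 2 * k * N + (2 * k * N + k * N) := by ring
      omega
    · -- some other terminal vertex lies on the path
      push_neg at hall
      obtain ⟨v, hvp, hvrel⟩ := hall
      have hvg : ∀ i j' q ℓ, v ≠ DIntV.grid i j' q ℓ := fun i j' q ℓ h =>
        hvrel (Or.inl ⟨i, j', q, ℓ, h⟩)
      have hvc : v ≠ DIntV.c j := fun h => hvrel (Or.inr (Or.inl h))
      have hvd : v ≠ DIntV.d j := fun h => hvrel (Or.inr (Or.inr h))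
      have hvcost : costInt k N v = 2 * k * N := by
        cases v with
        | grid i j' q ℓ => exact absurd rfl (hvg i j' q ℓ)
        | a i => rfl
        | b i => rfl
        | c j' => rfl
        | d j' => rfl
      have hsub2 : insert (DIntV.c j) (insert (DIntV.d j) {v}) ⊆ p.toFinset := by
        intro w hw
        simp only [Finset.mem_insert, Finset.mem_singleton] at hw
        rcases hw with rfl | rfl | rfl
        · exact List.mem_toFinset.mpr hc
        · exact List.mem_toFinset.mpr hd
        · exact List.mem_toFinset.mpr hvp
      have h4 : ∑ w ∈ insert (DIntV.c j) (insert (DIntV.d j) {v}), costInt k N w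
          = 2 * k * N + (2 * k * N + 2 * k * N) := by
        rw [Finset.sum_insert (by simp [hcd, Ne.symm hvc]),
          Finset.sum_insert (by simp [Ne.symm hvd]), Finset.sum_singleton, hvcost]
        rfl
      have hbig : 2 * k * N + (2 * k * N + 2 * k * N) ≤ pathCost (costInt k N) p := by
        rw [hsum, ← h4]
        exact Finset.sum_le_sum_of_subset hsub2
      have harith : 5 * k * N + k * N = 2 * k * N + (2 * k * N + 2 * k * N) := by ring
      omega
  refine ⟨part1, fun r => ?_⟩
  -- cost of the canonical path
  have hcost : pathCost (costInt k N) (canonH k N j r) = 5 * k * N := by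
    rw [canonH, pathCost]
    rw [List.map_cons, List.map_append, List.sum_cons, List.sum_append]
    have hones : ((List.map (costInt k N)
        ((List.finRange k).flatMap fun i =>
          (List.finRange N).map fun q => DIntV.grid i j q r))).sum
        = k * N := by
      rw [sum_map_eq_length]
      · rw [List.length_flatMap]
        have : List.map (fun i =>
            ((List.finRange N).map fun q => DIntV.grid i j q r).length) (List.finRange k)
            = List.map (fun _ => N) (List.finRange k) := by
          refine List.map_congr_left fun i _ => ?_
          simp
        rw [this, List.map_const', List.sum_replicate, List.length_finRange,
          smul_eq_mul]
      · intro x hx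
        rw [List.mem_flatMap] at hx
        obtain ⟨i, _, hx⟩ := hx
        rw [List.mem_map] at hx
        obtain ⟨q, _, rfl⟩ := hx
        rfl
    rw [hones]
    show 2 * k * N + (k * N + (2 * k * N + 0)) = 5 * k * N
    ring
  have hpath : IsPathList (UAdj (DIntE k N)) (DIntV.c j) (DIntV.d j) (canonH k N j r) := by
    refine ⟨?_, ?_, ?_, ?_⟩
    · rw [canonH_eq k N hk hN j r]
      exact G_chain k N hk hN j r
    · rw [canonH_eq k N hk hN j r]
      exact G_nodup k N hk hN j r
    · rfl
    · show ((DIntV.c j ::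
          ((List.finRange k).flatMap fun i =>
            (List.finRange N).map fun q => DIntV.grid i j q r)) ++
          [DIntV.d j]).getLast? = some (DIntV.d j)
      exact List.getLast?_concat
  refine ⟨hcost, hpath, fun q hq => ?_⟩
  rw [hcost]
  exact part1 q hq
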